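/- Let G=(V,E) be a finite simple graph. Assign to each edge (u,v) ∈ E the weight w_{(u,v)} = −log(1 − p_{(u,v)}), where p_{(u,v)} = 8^{−2^{d_u+d_v−2}} and d_u, d_v are the degrees of u and v. If ℰ ⊆ E is a set of pairwise vertex-disjoint edges with total weight w_ℰ = ∑_{e∈ℰ} w_e, then a random game on G has no pure Nash equilibrium with probability at least 1 − exp(−w_ℰ). -/

import Mathlib

open scoped Classical
open Finset

/-- Best-response tables of a graphical game with binary strategies on vertex set `V`:
player `v`'s table assigns a best response `ω v τ ∈ {0,1}` to each (masked) strategy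
profile `τ`. Only the values at profiles vanishing outside the neighborhood of `v` are
ever read, so under the uniform measure the read entries are i.i.d. uniform on `{0,1}`. -/
abbrev Tables (V : Type) := V → (V → Bool) → Bool

/-- Restriction of a strategy profile to the neighborhood of `v` in `G`
(strategies outside the neighborhood are replaced by `false`). -/
noncomputable def maskN {V : Type} (G : SimpleGraph V) (v : V) (σ : V → Bool) : V → Bool :=
  fun u => if G.Adj v u then σ u else false

/-- `σ` is a pure Nash equilibrium of the game on `G` with tables `ω`:
every player plays a best response to the strategies of its neighbors. -/
def isPNE {V : Type} (G : SimpleGraph V) (ω : Tables V) (σ : V → Bool) : Prop :=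
  ∀ v, σ v = ω v (maskN G v σ)

/-- Probability of a table event under the uniform measure on best-response tables
(the random game on a fixed graph). -/
noncomputable def probT (V : Type) [Fintype V] [DecidableEq V] (A : Tables V → Prop) : ℝ :=
  (∑ ω : Tables V, if A ω then (1 : ℝ) else 0) / (Fintype.card (Tables V) : ℝ)

/-- The degree of a vertex `v` in `G`. -/
noncomputable def degOf {V : Type} [Fintype V] (G : SimpleGraph V) (v : V) : ℕ :=
  (univ.filter fun u => G.Adj v u).card

variable {V : Type} [Fintype V] [DecidableEq V]


lemma cardT_pos : (0:ℝ) < (Fintype.card (Tables V) : ℝ) := by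
  exact_mod_cast Fintype.card_pos

lemma probT_nonneg (A : Tables V → Prop) : 0 ≤ probT V A :=
  div_nonneg (Finset.sum_nonneg fun ω _ => by by_cases h : A ω <;> simp [h]) cardT_pos.le

lemma probT_mono {A B : Tables V → Prop} (h : ∀ ω, A ω → B ω) : probT V A ≤ probT V B := by
  unfold probT
  have hs : (∑ ω : Tables V, if A ω then (1:ℝ) else 0) ≤ ∑ ω : Tables V, if B ω then (1:ℝ) else 0 :=
    Finset.sum_le_sum fun ω _ => by
      by_cases hA : A ω
      · simp [hA, h ω hA]
      · by_cases hB : B ω <;> simp [hA, hB]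
  exact (div_le_div_iff_of_pos_right cardT_pos).mpr hs

lemma probT_congr {A B : Tables V → Prop} (h : ∀ ω, A ω ↔ B ω) : probT V A = probT V B := by
  unfold probT
  congr 1
  exact Finset.sum_congr rfl fun ω _ => by by_cases hA : A ω <;> simp [hA, (h ω).symm, h ω]

lemma probT_true : probT V (fun _ => True) = 1 := by
  unfold probT
  simp [Finset.card_univ, div_self cardT_pos.ne']

lemma probT_or_disjoint' {A B : Tables V → Prop} (h : ∀ ω, ¬(A ω ∧ B ω)) :
    probT V (fun ω => A ω ∨ B ω) = probT V A + probT V B := by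
  simp only [probT]
  rw [← add_div]
  congr 1
  rw [← Finset.sum_add_distrib]
  refine Finset.sum_congr rfl fun ω _ => ?_
  by_cases hA : A ω <;> by_cases hB : B ω
  · exact absurd ⟨hA, hB⟩ (h ω)
  all_goals simp [hA, hB]

lemma probT_not (A : Tables V → Prop) : probT V (fun ω => ¬ A ω) = 1 - probT V A := by
  have h1 : probT V (fun ω => A ω ∨ ¬ A ω) = probT V A + probT V (fun ω => ¬ A ω) :=
    probT_or_disjoint' (fun ω => by tauto)
  have h2 : probT V (fun ω => A ω ∨ ¬ A ω) = 1 := by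
    rw [probT_congr (B := fun _ => True) (fun ω => by tauto)]
    exact probT_true
  linarith

lemma probT_le_one (A : Tables V → Prop) : probT V A ≤ 1 := by
  have h := probT_nonneg (V := V) (fun ω => ¬ A ω)
  rw [probT_not] at h; linarith


noncomputable def ind (P : Prop) : ℝ := if P then 1 else 0

lemma ind_congr {P Q : Prop} (h : P ↔ Q) : ind P = ind Q := by
  unfold ind
  split_ifs with h1 h2 <;> simp_all

lemma ind_and (P Q : Prop) : ind (P ∧ Q) = ind P * ind Q := by
  by_cases hP : P <;> by_cases hQ : Q <;> simp [ind, hP, hQ]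

lemma probT_eq_ind (A : Tables V → Prop) :
    probT V A = (∑ ω : Tables V, ind (A ω)) / (Fintype.card (Tables V) : ℝ) := by
  unfold probT ind
  rfl

lemma probT_indep (p : V → Prop) [DecidablePred p] (A B : Tables V → Prop)
    (hA : ∀ ω ω' : Tables V, (∀ i, p i → ω i = ω' i) → A ω → A ω')
    (hB : ∀ ω ω' : Tables V, (∀ i, ¬ p i → ω i = ω' i) → B ω → B ω') :
    probT V (fun ω => A ω ∧ B ω) = probT V A * probT V B := by
  classical
  set H := (V → Bool) → Bool with hH
  let e : (({x // p x} → H) × ({x // ¬ p x} → H)) ≃ Tables V :=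
    (Equiv.piEquivPiSubtypeProd p (fun _ : V => H)).symm
  let y₀ : {x // ¬ p x} → H := fun _ _ => false
  let x₀ : {x // p x} → H := fun _ _ => false
  have eapp : ∀ (x : {x // p x} → H) (y : {x // ¬ p x} → H) (i : V),
      e (x, y) i = if hi : p i then x ⟨i, hi⟩ else y ⟨i, hi⟩ := by
    intro x y i
    simp [e, Equiv.piEquivPiSubtypeProd_symm_apply]
  have keyA : ∀ x y, A (e (x, y)) ↔ A (e (x, y₀)) := by
    intro x y
    have hag : ∀ i, p i → e (x, y) i = e (x, y₀) i := by
      intro i hi; rw [eapp, eapp, dif_pos hi, dif_pos hi]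
    exact ⟨hA _ _ hag, hA _ _ (fun i hi => (hag i hi).symm)⟩
  have keyB : ∀ x y, B (e (x, y)) ↔ B (e (x₀, y)) := by
    intro x y
    have hag : ∀ i, ¬ p i → e (x, y) i = e (x₀, y) i := by
      intro i hi; rw [eapp, eapp, dif_neg hi, dif_neg hi]
    exact ⟨hB _ _ hag, hB _ _ (fun i hi => (hag i hi).symm)⟩
  set g : ({x // p x} → H) → ℝ := fun x => ind (A (e (x, y₀))) with hg
  set h : ({x // ¬ p x} → H) → ℝ := fun y => ind (B (e (x₀, y))) with hh
  set cX : ℝ := (Fintype.card ({x // p x} → H) : ℝ) with hcX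
  set cY : ℝ := (Fintype.card ({x // ¬ p x} → H) : ℝ) with hcY
  have hcXpos : 0 < cX := by
    rw [hcX]; exact_mod_cast (Fintype.card_pos : 0 < Fintype.card ({x // p x} → H))
  have hcYpos : 0 < cY := by
    rw [hcY]; exact_mod_cast (Fintype.card_pos : 0 < Fintype.card ({x // ¬ p x} → H))
  have hN : (Fintype.card (Tables V) : ℝ) = cX * cY := by
    have hc : Fintype.card (Tables V) = Fintype.card (({x // p x} → H) × ({x // ¬ p x} → H)) :=
      Fintype.card_congr e.symm
    rw [hcX, hcY, ← Nat.cast_mul, ← Fintype.card_prod, hc]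
  have hsum : ∀ (C : Tables V → Prop),
      (∑ ω : Tables V, ind (C ω))
        = ∑ x, ∑ y, ind (C (e (x, y))) := by
    intro C
    calc (∑ ω : Tables V, ind (C ω))
        = ∑ z : ({x // p x} → H) × ({x // ¬ p x} → H), ind (C (e z)) :=
          (Equiv.sum_comp e (fun ω => ind (C ω))).symm
      _ = _ := Fintype.sum_prod_type _
  have hSAB : (∑ ω : Tables V, ind (A ω ∧ B ω)) = (∑ x, g x) * (∑ y, h y) := by
    rw [hsum (fun ω => A ω ∧ B ω), Finset.sum_mul_sum]
    refine Finset.sum_congr rfl fun x _ => Finset.sum_congr rfl fun y _ => ?_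
    rw [ind_and]
    exact congrArg₂ (· * ·) (ind_congr (keyA x y)) (ind_congr (keyB x y))
  have hSA : (∑ ω : Tables V, ind (A ω)) = (∑ x, g x) * cY := by
    rw [hsum A]
    have hx : ∀ x, (∑ y, ind (A (e (x,y)))) = g x * cY := by
      intro x
      rw [Finset.sum_congr rfl fun y _ => ind_congr (keyA x y), Finset.sum_const,
        Finset.card_univ, nsmul_eq_mul, mul_comm, hcY]
    rw [Finset.sum_congr rfl fun x _ => hx x, ← Finset.sum_mul]
  have hSB : (∑ ω : Tables V, ind (B ω)) = cX * (∑ y, h y) := by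
    rw [hsum B]
    have hx : ∀ x : {x // p x} → H, (∑ y, ind (B (e (x,y)))) = ∑ y, h y :=
      fun x => Finset.sum_congr rfl fun y _ => ind_congr (keyB x y)
    rw [Finset.sum_congr rfl fun x _ => hx x, Finset.sum_const, Finset.card_univ,
      nsmul_eq_mul, hcX]
  rw [probT_eq_ind, probT_eq_ind, probT_eq_ind, hN, hSA, hSB, hSAB]
  field_simp

lemma probT_coord (u : V) (A : ((V → Bool) → Bool) → Prop) :
    probT V (fun ω => A (ω u)) =
      (∑ h : (V → Bool) → Bool, ind (A h)) / (Fintype.card ((V → Bool) → Bool) : ℝ) := by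
  classical
  let e : (((V → Bool) → Bool) × ({j // j ≠ u} → ((V → Bool) → Bool))) ≃ Tables V :=
    (Equiv.funSplitAt u ((V → Bool) → Bool)).symm
  have eapp : ∀ (z : ((V → Bool) → Bool) × ({j // j ≠ u} → ((V → Bool) → Bool))), e z u = z.1 := by
    intro z
    show (Equiv.funSplitAt u ((V → Bool) → Bool)).symm z u = z.1
    simp [Equiv.funSplitAt, Equiv.piSplitAt]
  set cR : ℝ := (Fintype.card ({j // j ≠ u} → ((V → Bool) → Bool)) : ℝ) with hcR
  have hcRpos : 0 < cR := by
    rw [hcR]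
    exact_mod_cast (Fintype.card_pos : 0 < Fintype.card ({j // j ≠ u} → ((V → Bool) → Bool)))
  have hcHpos : 0 < (Fintype.card ((V → Bool) → Bool) : ℝ) := by
    exact_mod_cast (Fintype.card_pos : 0 < Fintype.card ((V → Bool) → Bool))
  have hN : (Fintype.card (Tables V) : ℝ) = (Fintype.card ((V → Bool) → Bool) : ℝ) * cR := by
    have hc : Fintype.card (Tables V)
        = Fintype.card ((((V → Bool) → Bool)) × ({j // j ≠ u} → ((V → Bool) → Bool))) :=
      Fintype.card_congr e.symm
    rw [hcR, ← Nat.cast_mul, ← Fintype.card_prod, hc]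
  have hS : (∑ ω : Tables V, ind (A (ω u))) = (∑ h : (V → Bool) → Bool, ind (A h)) * cR := by
    calc (∑ ω : Tables V, ind (A (ω u)))
        = ∑ z : (((V → Bool) → Bool)) × ({j // j ≠ u} → ((V → Bool) → Bool)), ind (A (e z u)) :=
          (Equiv.sum_comp e (fun ω => ind (A (ω u)))).symm
      _ = ∑ x : (V → Bool) → Bool, ∑ y : {j // j ≠ u} → ((V → Bool) → Bool), ind (A (e (x, y) u)) :=
          Fintype.sum_prod_type _
      _ = ∑ x : (V → Bool) → Bool, ind (A x) * cR := by
          refine Finset.sum_congr rfl fun x _ => ?_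
          have hy : ∀ y : {j // j ≠ u} → ((V → Bool) → Bool), ind (A (e (x, y) u)) = ind (A x) :=
            fun y => by rw [eapp (x, y)]
          rw [Finset.sum_congr rfl fun y _ => hy y, Finset.sum_const, Finset.card_univ,
            nsmul_eq_mul, mul_comm, hcR]
      _ = (∑ h : (V → Bool) → Bool, ind (A h)) * cR := (Finset.sum_mul _ _ _).symm
  rw [probT_eq_ind, hS, hN]
  field_simp

lemma count_prescribed {β : Type} [Fintype β] [DecidableEq β] (T : Finset β) (c : β → Bool) :
    (∑ h : β → Bool, ind (∀ b ∈ T, h b = c b))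
      = (2:ℝ) ^ (Fintype.card β - T.card) := by
  classical
  have h1 : (∑ h : β → Bool, ind (∀ b ∈ T, h b = c b))
      = (Fintype.card {h : β → Bool // ∀ b ∈ T, h b = c b} : ℝ) := by
    rw [Fintype.card_subtype]
    rw [← Finset.sum_boole]
    refine Finset.sum_congr rfl fun h _ => ?_
    unfold ind
    by_cases hh : ∀ b ∈ T, h b = c b <;> simp [hh]
  rw [h1]
  have e : {h : β → Bool // ∀ b ∈ T, h b = c b} ≃ ({b : β // b ∉ T} → Bool) :=
    { toFun := fun h b => h.1 b.1
      invFun := fun g => ⟨fun b => if hb : b ∈ T then c b else g ⟨b, hb⟩, by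
        intro b hb; simp [hb]⟩
      left_inv := by
        intro h
        ext b
        by_cases hb : b ∈ T
        · simp [hb, (h.2 b hb).symm]
        · simp [hb]
      right_inv := by
        intro g
        ext b
        simp [b.2] }
  rw [Fintype.card_congr e, Fintype.card_fun, Fintype.card_bool]
  have hcompl : Fintype.card {b : β // b ∉ T} = Fintype.card β - T.card := by
    rw [Fintype.card_subtype_compl, Fintype.card_coe]
  rw [hcompl]
  push_cast
  ring

lemma maskN_apply_adj {G : SimpleGraph V} {w x : V} (h : G.Adj w x) (σ : V → Bool) :
    maskN G w σ x = σ x := if_pos h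

lemma card_image_maskN (G : SimpleGraph V) (u : V) :
    (univ.image (maskN G u)).card = 2 ^ degOf G u := by
  classical
  have himg : (univ.image (maskN G u)) = univ.filter (fun τ => ∀ w, ¬ G.Adj u w → τ w = false) := by
    ext τ
    simp only [Finset.mem_image, Finset.mem_filter, Finset.mem_univ, true_and]
    constructor
    · rintro ⟨σ, rfl⟩ w hw
      simp [maskN, hw]
    · intro hτ
      refine ⟨τ, ?_⟩
      funext w
      by_cases hw : G.Adj u w
      · simp [maskN, hw]
      · simp [maskN, hw, hτ w hw]
  rw [himg, ← Fintype.card_subtype]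
  have e : {τ : V → Bool // ∀ w, ¬ G.Adj u w → τ w = false} ≃ ({w : V // G.Adj u w} → Bool) :=
    { toFun := fun τ w => τ.1 w.1
      invFun := fun g => ⟨fun w => if hw : G.Adj u w then g ⟨w, hw⟩ else false,
        fun w hw => dif_neg hw⟩
      left_inv := by
        intro τ
        ext w
        by_cases hw : G.Adj u w
        · simp [hw]
        · simp [hw, τ.2 w hw]
      right_inv := by
        intro g
        ext w
        simp [w.2] }
  rw [Fintype.card_congr e, Fintype.card_fun, Fintype.card_bool, Fintype.card_subtype]
  rfl

lemma probT_copy (G : SimpleGraph V) {w x : V} (hadj : G.Adj w x) (F : Bool → Bool) :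
    probT V (fun ω => ∀ σ, ω w (maskN G w σ) = F (σ x)) = ((2:ℝ) ^ (2 ^ degOf G w))⁻¹ := by
  classical
  have h0 : probT V (fun ω => ∀ σ, ω w (maskN G w σ) = F (σ x))
      = (∑ h : (V → Bool) → Bool, ind (∀ σ, h (maskN G w σ) = F (σ x)))
        / (Fintype.card ((V → Bool) → Bool) : ℝ) :=
    probT_coord w (fun h => ∀ σ, h (maskN G w σ) = F (σ x))
  have hiff : ∀ h : (V → Bool) → Bool,
      (∀ σ, h (maskN G w σ) = F (σ x)) ↔ (∀ τ ∈ univ.image (maskN G w), h τ = F (τ x)) := by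
    intro h
    constructor
    · rintro hh τ hτ
      obtain ⟨σ, _, rfl⟩ := Finset.mem_image.mp hτ
      rw [hh σ, maskN_apply_adj hadj]
    · intro hh σ
      rw [hh (maskN G w σ) (Finset.mem_image_of_mem _ (Finset.mem_univ σ)), maskN_apply_adj hadj]
  rw [h0, Finset.sum_congr rfl fun h _ => ind_congr (hiff h),
    count_prescribed (univ.image (maskN G w)) (fun τ => F (τ x)), card_image_maskN]
  have hM : (Fintype.card ((V → Bool) → Bool) : ℝ) = (2:ℝ) ^ (Fintype.card (V → Bool)) := by
    rw [Fintype.card_fun, Fintype.card_bool]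
    push_cast
    ring
  have hle : 2 ^ degOf G w ≤ Fintype.card (V → Bool) := by
    rw [← card_image_maskN G w]
    exact Finset.card_le_univ _
  rw [hM, pow_sub₀ (2:ℝ) (by norm_num) hle]
  have h2 : ((2:ℝ) ^ (Fintype.card (V → Bool))) ≠ 0 := by positivity
  field_simp

def CopyEv (G : SimpleGraph V) (w x : V) (F : Bool → Bool) (ω : Tables V) : Prop :=
  ∀ σ, ω w (maskN G w σ) = F (σ x)

def Bev (G : SimpleGraph V) (e : V × V) (ω : Tables V) : Prop :=
  (CopyEv G e.1 e.2 id ω ∧ CopyEv G e.2 e.1 not ω) ∨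
  (CopyEv G e.1 e.2 not ω ∧ CopyEv G e.2 e.1 id ω)

lemma CopyEv_move {G : SimpleGraph V} {w x : V} {F : Bool → Bool} {ω ω' : Tables V}
    (h : ω w = ω' w) : CopyEv G w x F ω → CopyEv G w x F ω' := by
  intro hc σ
  rw [← h]
  exact hc σ

lemma Bev_move {G : SimpleGraph V} {e : V × V} {ω ω' : Tables V}
    (h1 : ω e.1 = ω' e.1) (h2 : ω e.2 = ω' e.2) : Bev G e ω → Bev G e ω' := by
  rintro (⟨hc, hd⟩ | ⟨hc, hd⟩)
  · exact Or.inl ⟨CopyEv_move h1 hc, CopyEv_move h2 hd⟩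
  · exact Or.inr ⟨CopyEv_move h1 hc, CopyEv_move h2 hd⟩

lemma probT_CopyPair {G : SimpleGraph V} {e : V × V} (hadj : G.Adj e.1 e.2)
    (F₁ F₂ : Bool → Bool) :
    probT V (fun ω => CopyEv G e.1 e.2 F₁ ω ∧ CopyEv G e.2 e.1 F₂ ω)
      = ((2:ℝ) ^ (2 ^ degOf G e.1))⁻¹ * ((2:ℝ) ^ (2 ^ degOf G e.2))⁻¹ := by
  have hA : ∀ ω ω' : Tables V, (∀ i, i = e.1 → ω i = ω' i) →
      CopyEv G e.1 e.2 F₁ ω → CopyEv G e.1 e.2 F₁ ω' :=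
    fun ω ω' hag => CopyEv_move (hag e.1 rfl)
  have hB : ∀ ω ω' : Tables V, (∀ i, ¬ i = e.1 → ω i = ω' i) →
      CopyEv G e.2 e.1 F₂ ω → CopyEv G e.2 e.1 F₂ ω' :=
    fun ω ω' hag => CopyEv_move (hag e.2 hadj.ne')
  rw [probT_indep (fun i => i = e.1) _ _ hA hB]
  have h1 : probT V (CopyEv G e.1 e.2 F₁) = ((2:ℝ) ^ (2 ^ degOf G e.1))⁻¹ :=
    probT_copy G hadj F₁
  have h2 : probT V (CopyEv G e.2 e.1 F₂) = ((2:ℝ) ^ (2 ^ degOf G e.2))⁻¹ :=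
    probT_copy G hadj.symm F₂
  rw [h1, h2]

lemma probT_Bev {G : SimpleGraph V} {e : V × V} (hadj : G.Adj e.1 e.2) :
    probT V (Bev G e)
      = 2 * (((2:ℝ) ^ (2 ^ degOf G e.1))⁻¹ * ((2:ℝ) ^ (2 ^ degOf G e.2))⁻¹) := by
  have hdis : ∀ ω : Tables V, ¬ ((CopyEv G e.1 e.2 id ω ∧ CopyEv G e.2 e.1 not ω)
      ∧ (CopyEv G e.1 e.2 not ω ∧ CopyEv G e.2 e.1 id ω)) := by
    rintro ω ⟨⟨h1, -⟩, ⟨h2, -⟩⟩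
    have e1 := h1 (fun _ => true)
    have e2 := h2 (fun _ => true)
    rw [e1] at e2
    simp at e2
  have h0 : probT V (Bev G e)
      = probT V (fun ω => (CopyEv G e.1 e.2 id ω ∧ CopyEv G e.2 e.1 not ω)
          ∨ (CopyEv G e.1 e.2 not ω ∧ CopyEv G e.2 e.1 id ω)) :=
    probT_congr (fun ω => Iff.rfl)
  rw [h0, probT_or_disjoint' hdis, probT_CopyPair hadj id not, probT_CopyPair hadj not id]
  ring

lemma probT_prod (G : SimpleGraph V) (s : Finset (V × V)) :
    (∀ e ∈ s, ∀ f ∈ s, e ≠ f → e.1 ≠ f.1 ∧ e.1 ≠ f.2 ∧ e.2 ≠ f.1 ∧ e.2 ≠ f.2) →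
    probT V (fun ω => ∀ e ∈ s, ¬ Bev G e ω) = ∏ e ∈ s, probT V (fun ω => ¬ Bev G e ω) := by
  classical
  induction s using Finset.induction_on with
  | empty =>
    intro _
    rw [probT_congr (B := fun _ => True) (fun ω => by simp), probT_true, Finset.prod_empty]
  | @insert a s ha ih =>
    intro hd
    have hstep : probT V (fun ω => ∀ e ∈ insert a s, ¬ Bev G e ω)
        = probT V (fun ω => (¬ Bev G a ω) ∧ ∀ e ∈ s, ¬ Bev G e ω) :=
      probT_congr (fun ω => by simp [Finset.forall_mem_insert])
    have hA : ∀ ω ω' : Tables V, (∀ i, (i = a.1 ∨ i = a.2) → ω i = ω' i) →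
        (¬ Bev G a ω) → ¬ Bev G a ω' := by
      intro ω ω' hag hn hb
      exact hn (Bev_move (hag a.1 (Or.inl rfl)).symm (hag a.2 (Or.inr rfl)).symm hb)
    have hB : ∀ ω ω' : Tables V, (∀ i, ¬ (i = a.1 ∨ i = a.2) → ω i = ω' i) →
        (∀ e ∈ s, ¬ Bev G e ω) → ∀ e ∈ s, ¬ Bev G e ω' := by
      intro ω ω' hag hn e he hb
      have hne : e ≠ a := fun h => ha (h ▸ he)
      obtain ⟨h1, h2, h3, h4⟩ := hd e (Finset.mem_insert_of_mem he) a (Finset.mem_insert_self a s) hne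
      refine hn e he (Bev_move ?_ ?_ hb)
      · exact (hag e.1 (by tauto)).symm
      · exact (hag e.2 (by tauto)).symm
    rw [hstep, probT_indep (fun i => i = a.1 ∨ i = a.2) _ _ hA hB, Finset.prod_insert ha,
      ih (fun e he f hf hef => hd e (Finset.mem_insert_of_mem he) f (Finset.mem_insert_of_mem hf) hef)]

noncomputable def pe {V : Type} [Fintype V] (G : SimpleGraph V) (e : V × V) : ℝ :=
  (8 : ℝ) ^ (-((2 : ℝ) ^ ((degOf G e.1 : ℝ) + (degOf G e.2 : ℝ) - 2)))

lemma degOf_pos {G : SimpleGraph V} {w x : V} (hadj : G.Adj w x) : 1 ≤ degOf G w :=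
  Finset.card_pos.mpr ⟨x, by simp [hadj]⟩

lemma pe_pos {G : SimpleGraph V} (e : V × V) : 0 < pe G e :=
  Real.rpow_pos_of_pos (by norm_num) _

lemma pe_lt_one {G : SimpleGraph V} (e : V × V) : pe G e < 1 :=
  Real.rpow_lt_one_of_one_lt_of_neg (by norm_num)
    (neg_lt_zero.mpr (Real.rpow_pos_of_pos two_pos _))

lemma pe_le {G : SimpleGraph V} {e : V × V} (hadj : G.Adj e.1 e.2) :
    pe G e ≤ probT V (Bev G e) := by
  rw [probT_Bev hadj]
  obtain ⟨a', ha'⟩ : ∃ a', degOf G e.1 = a' + 1 :=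
    ⟨degOf G e.1 - 1, (Nat.sub_add_cancel (degOf_pos hadj)).symm⟩
  obtain ⟨b', hb'⟩ : ∃ b', degOf G e.2 = b' + 1 :=
    ⟨degOf G e.2 - 1, (Nat.sub_add_cancel (degOf_pos hadj.symm)).symm⟩
  rw [pe, ha', hb']
  have hR : 2 * (((2:ℝ) ^ (2 ^ (a'+1)))⁻¹ * ((2:ℝ) ^ (2 ^ (b'+1)))⁻¹)
      = (2:ℝ) ^ ((1 : ℝ) - ((2 ^ (a'+1) : ℕ) : ℝ) - ((2 ^ (b'+1) : ℕ) : ℝ)) := by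
    rw [Real.rpow_sub two_pos, Real.rpow_sub two_pos, Real.rpow_one,
      Real.rpow_natCast, Real.rpow_natCast]
    field_simp
  have hL : (8:ℝ) ^ (-((2:ℝ) ^ (((a'+1 : ℕ) : ℝ) + ((b'+1 : ℕ) : ℝ) - 2)))
      = (2:ℝ) ^ ((3:ℝ) * -(((2 ^ (a'+b') : ℕ) : ℝ))) := by
    have h8 : (8:ℝ) = (2:ℝ) ^ (3:ℝ) := by
      rw [show (3:ℝ) = ((3:ℕ):ℝ) by norm_num, Real.rpow_natCast]
      norm_num
    have hexp : ((a'+1 : ℕ) : ℝ) + ((b'+1 : ℕ) : ℝ) - 2 = ((a'+b' : ℕ) : ℝ) := by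
      push_cast; ring
    rw [hexp, h8, ← Real.rpow_mul (by norm_num : (0:ℝ) ≤ 2)]
    norm_cast
  rw [hL, hR]
  apply (Real.rpow_le_rpow_left_iff (by norm_num : (1:ℝ) < 2)).mpr
  have hx : (1:ℝ) ≤ (2:ℝ) ^ a' := one_le_pow₀ (by norm_num)
  have hy : (1:ℝ) ≤ (2:ℝ) ^ b' := one_le_pow₀ (by norm_num)
  have key : (2:ℝ) ^ (a'+1) + (2:ℝ) ^ (b'+1) ≤ 1 + 3 * (2:ℝ) ^ (a'+b') := by
    rw [pow_succ, pow_succ, pow_add]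
    nlinarith [mul_nonneg (sub_nonneg.mpr hx) (sub_nonneg.mpr hy)]
  push_cast
  linarith [key]

/-- **Weighted independent edge sets.** Give each edge `(u,v)` weight
`w_{(u,v)} = -log(1 - p_{(u,v)})` with `p_{(u,v)} = 8^{-2^{d_u + d_v - 2}}`. If `ℰ` is a
set of pairwise vertex-disjoint edges of total weight `w_ℰ`, then a random game on `G`
has no pure Nash equilibrium with probability at least `1 - exp(-w_ℰ)`. -/
theorem stmt9 {V : Type} [Fintype V] [DecidableEq V] (G : SimpleGraph V)
    (E' : Finset (V × V))
    (hedge : ∀ e ∈ E', G.Adj e.1 e.2)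
    (hdisj : ∀ e ∈ E', ∀ f ∈ E', e ≠ f →
      e.1 ≠ f.1 ∧ e.1 ≠ f.2 ∧ e.2 ≠ f.1 ∧ e.2 ≠ f.2) :
    1 - Real.exp (-(∑ e ∈ E',
        -Real.log (1 - (8 : ℝ) ^ (-((2 : ℝ) ^ ((degOf G e.1 : ℝ) + (degOf G e.2 : ℝ) - 2)))))) ≤
      probT V (fun ω => ¬ ∃ σ, isPNE G ω σ) := by
  classical
  show 1 - Real.exp (-(∑ e ∈ E', -Real.log (1 - pe G e)))
      ≤ probT V (fun ω => ¬ ∃ σ, isPNE G ω σ)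
  have hexp : Real.exp (-(∑ e ∈ E', -Real.log (1 - pe G e))) = ∏ e ∈ E', (1 - pe G e) := by
    rw [Finset.sum_neg_distrib, neg_neg, Real.exp_sum]
    exact Finset.prod_congr rfl fun e _ => Real.exp_log (by linarith [pe_lt_one (G := G) e])
  have h1 : probT V (fun ω => ∃ e ∈ E', Bev G e ω) ≤ probT V (fun ω => ¬ ∃ σ, isPNE G ω σ) := by
    refine probT_mono ?_
    rintro ω ⟨e, he, hb⟩ ⟨σ, hσ⟩
    rcases hb with ⟨hc, hd⟩ | ⟨hc, hd⟩
    · have q1 : σ e.1 = σ e.2 := by rw [hσ e.1, hc σ]; rfl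
      have q2 : σ e.2 = !(σ e.1) := by rw [hσ e.2, hd σ]
      rw [q1] at q2
      simp at q2
    · have q1 : σ e.1 = !(σ e.2) := by rw [hσ e.1, hc σ]
      have q2 : σ e.2 = σ e.1 := by rw [hσ e.2, hd σ]; rfl
      rw [q2] at q1
      simp at q1
  have h2 : probT V (fun ω => ∃ e ∈ E', Bev G e ω)
      = 1 - probT V (fun ω => ∀ e ∈ E', ¬ Bev G e ω) := by
    have hn := probT_not (V := V) (fun ω => ∃ e ∈ E', Bev G e ω)
    have hcg : probT V (fun ω => ¬ ∃ e ∈ E', Bev G e ω)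
        = probT V (fun ω => ∀ e ∈ E', ¬ Bev G e ω) :=
      probT_congr (fun ω => by push_neg; rfl)
    linarith [hn, hcg]
  have h3 := probT_prod G E' hdisj
  have h5 : ∏ e ∈ E', probT V (fun ω => ¬ Bev G e ω) ≤ ∏ e ∈ E', (1 - pe G e) := by
    refine Finset.prod_le_prod (fun e he => ?_) (fun e he => ?_)
    · rw [probT_not (V := V) (Bev G e)]
      linarith [probT_le_one (V := V) (Bev G e)]
    · rw [probT_not (V := V) (Bev G e)]
      linarith [pe_le (hedge e he)]
  rw [hexp]
  have := h2
  linarith [h1, h2, h3 ▸ h5]
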